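/- Let U ⊂ ℝ² be convex and open, let L ≥ 0, δ > 0, r ∈ (0,1], and let ζ : U → ℝ be Lipschitz with constant at most L, (1/r)-semiconvex, and a viscosity subsolution of ∂_t ζ + (1/2)(∂_x ζ)² ≤ −δ in U. Then for every z₀ = (t₀,x₀) ∈ U there exist v, w ∈ ℝ with √(v² + w²) ≤ L and v + w²/2 ≤ −δ such that ζ(t,x) ≥ ζ(t₀,x₀) + v (t − t₀) + w (x − x₀) − ((t − t₀)² + (x − x₀)²)/(2r) for all (t,x) ∈ U. -/

import Mathlib

open MeasureTheory Set Filter Topology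

noncomputable section

/-- The `t`-partial derivative (coordinates on `ℝ²` are `z = (t, x)`). -/
def pdt (φ : ℝ × ℝ → ℝ) (z : ℝ × ℝ) : ℝ := fderiv ℝ φ z (1, 0)

/-- The `x`-partial derivative. -/
def pdx (φ : ℝ × ℝ → ℝ) (z : ℝ × ℝ) : ℝ := fderiv ℝ φ z (0, 1)

/-- `φ ∈ C_c^∞(Ω)`: a smooth compactly supported test function with support in `Ω`. -/
def IsTestFun (Ω : Set (ℝ × ℝ)) (φ : ℝ × ℝ → ℝ) : Prop :=
  ContDiff ℝ (⊤ : ℕ∞) φ ∧ HasCompactSupport φ ∧ tsupport φ ⊆ Ω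

/-- `u` is a weak solution of Burgers' equation `∂ₜ u + ∂ₓ (u²/2) = 0` on `Ω`. -/
def IsWeakBurgers (Ω : Set (ℝ × ℝ)) (u : ℝ × ℝ → ℝ) : Prop :=
  ∀ φ, IsTestFun Ω φ → ∫ z in Ω, (u z * pdt φ z + u z ^ 2 / 2 * pdx φ z) = 0

/-- The (finite) signed Radon measure `μ` on `Ω` is the quadratic entropy production
`μ = ∂ₜ(u²/2) + ∂ₓ(u³/3)` of `u`. -/
def IsEntropyProduction (Ω : Set (ℝ × ℝ)) (u : ℝ × ℝ → ℝ)
    (μ : MeasureTheory.SignedMeasure (ℝ × ℝ)) : Prop :=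
  μ.totalVariation Ωᶜ = 0 ∧
  ∀ φ, IsTestFun Ω φ →
    ∫ z in Ω, (u z ^ 2 / 2 * pdt φ z + u z ^ 3 / 3 * pdx φ z)
      = -((∫ z, φ z ∂μ.toJordanDecomposition.posPart)
          - ∫ z, φ z ∂μ.toJordanDecomposition.negPart)

/-- The square `Q_r(z) = (t-r,t+r) × (x-r,x+r)` for `z = (t,x)`. -/
def Qsq (z : ℝ × ℝ) (r : ℝ) : Set (ℝ × ℝ) :=
  Ioo (z.1 - r) (z.1 + r) ×ˢ Ioo (z.2 - r) (z.2 + r)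

/-- The set `Ω_{α,K}` of points where `|μ|(Q_r(z)) ≤ K r^{1+α}` for all
`r ∈ (0, min(d(z),1))`; here `d(z)` is the `ℓ^∞`-distance of `z` to `Ωᶜ`
(the product metric on `ℝ × ℝ` is the sup metric). -/
def OmegaAK (Ω : Set (ℝ × ℝ)) (μ : MeasureTheory.SignedMeasure (ℝ × ℝ)) (α K : ℝ) :
    Set (ℝ × ℝ) :=
  {z | z ∈ Ω ∧ ∀ r : ℝ, 0 < r → r < min (Metric.infDist z Ωᶜ) 1 →
    μ.totalVariation (Qsq z r) ≤ ENNReal.ofReal (K * r ^ (1 + α))}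

/-- Squared Euclidean norm `|z|² = t² + x²` on `ℝ²`. -/
def sqnorm (z : ℝ × ℝ) : ℝ := z.1 ^ 2 + z.2 ^ 2

/-- `f` is `L`-Lipschitz on `U` with respect to the Euclidean norm on `ℝ²`. -/
def EuclLipOnWith (L : ℝ) (f : ℝ × ℝ → ℝ) (U : Set (ℝ × ℝ)) : Prop :=
  ∀ z ∈ U, ∀ z' ∈ U, |f z - f z'| ≤ L * Real.sqrt (sqnorm (z - z'))

/-- Closed Euclidean ball of radius `ρ` centered at `z₀`. -/
def closedBallE (z₀ : ℝ × ℝ) (ρ : ℝ) : Set (ℝ × ℝ) := {z | sqnorm (z - z₀) ≤ ρ ^ 2}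

/-- Open Euclidean ball of radius `ρ` centered at `z₀`. -/
def ballE (z₀ : ℝ × ℝ) (ρ : ℝ) : Set (ℝ × ℝ) := {z | sqnorm (z - z₀) < ρ ^ 2}

/-- `ζ` is a viscosity subsolution of `∂ₜζ + (1/2)(∂ₓζ)² ≤ c` in `U`. -/
def ViscSubsolOn (U : Set (ℝ × ℝ)) (ζ : ℝ × ℝ → ℝ) (c : ℝ) : Prop :=
  ∀ φ : ℝ × ℝ → ℝ, ContDiff ℝ (⊤ : ℕ∞) φ →
    ∀ z₀ ∈ U, IsLocalMax (fun z => ζ z - φ z) z₀ →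
      pdt φ z₀ + (pdx φ z₀) ^ 2 / 2 ≤ c

/-- `ζ` is `(1/r)`-semiconvex on `U`: `z ↦ ζ(z) + |z|²/(2r)` is convex. -/
def SemiconvexOn (U : Set (ℝ × ℝ)) (r : ℝ) (ζ : ℝ × ℝ → ℝ) : Prop :=
  ConvexOn ℝ U (fun z => ζ z + sqnorm z / (2 * r))

lemma abs_le_sqrt_add (a b : ℝ) : |a| ≤ Real.sqrt (a^2 + b^2) := by
  rw [← Real.sqrt_sq_eq_abs]
  exact Real.sqrt_le_sqrt (by nlinarith [sq_nonneg b])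

lemma zeta_contOn {L : ℝ} (hL : 0 ≤ L) {ζ : ℝ × ℝ → ℝ} {U : Set (ℝ × ℝ)}
    (h : EuclLipOnWith L ζ U) : ContinuousOn ζ U := by
  have hlip : LipschitzOnWith (Real.toNNReal (L * Real.sqrt 2)) ζ U := by
    rw [lipschitzOnWith_iff_dist_le_mul]
    intro z hz z' hz'
    have h2 := h z hz z' hz'
    rw [Real.dist_eq]
    refine h2.trans ?_
    rw [Real.coe_toNNReal _ (by positivity)]
    have hd1 : dist z.1 z'.1 ≤ dist z z' := by rw [Prod.dist_eq]; exact le_max_left _ _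
    have hd2 : dist z.2 z'.2 ≤ dist z z' := by rw [Prod.dist_eq]; exact le_max_right _ _
    rw [Real.dist_eq] at hd1 hd2
    have hdn : 0 ≤ dist z z' := dist_nonneg
    have hs : Real.sqrt (sqnorm (z - z')) ≤ Real.sqrt 2 * dist z z' := by
      have h1 : sqnorm (z - z') ≤ 2 * (dist z z')^2 := by
        simp only [sqnorm, Prod.fst_sub, Prod.snd_sub]
        nlinarith [abs_nonneg (z.1 - z'.1), abs_nonneg (z.2 - z'.2), sq_abs (z.1 - z'.1), sq_abs (z.2 - z'.2)]
      calc Real.sqrt (sqnorm (z - z')) ≤ Real.sqrt (2 * (dist z z')^2) := Real.sqrt_le_sqrt h1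
        _ = Real.sqrt 2 * dist z z' := by
            rw [Real.sqrt_mul (by norm_num), Real.sqrt_sq hdn]
    calc L * Real.sqrt (sqnorm (z - z')) ≤ L * (Real.sqrt 2 * dist z z') :=
          mul_le_mul_of_nonneg_left hs hL
      _ = L * Real.sqrt 2 * dist z z' := by ring
  exact hlip.continuousOn

lemma supp_bound {U : Set (ℝ × ℝ)} (hUo : IsOpen U) {L r : ℝ} (hL : 0 ≤ L) (hr : 0 < r)
    {ζ : ℝ × ℝ → ℝ} (hζL : EuclLipOnWith L ζ U) {z₁ : ℝ × ℝ} (hz₁ : z₁ ∈ U) {v w : ℝ}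
    (hsupp : ∀ z ∈ U, ζ z₁ + v * (z.1 - z₁.1) + w * (z.2 - z₁.2)
      - ((z.1 - z₁.1) ^ 2 + (z.2 - z₁.2) ^ 2) / (2 * r) ≤ ζ z) :
    Real.sqrt (v ^ 2 + w ^ 2) ≤ L := by
  set s := Real.sqrt (v ^ 2 + w ^ 2) with hs
  by_contra hcon
  push_neg at hcon
  have hs0 : 0 < s := lt_of_le_of_lt hL hcon
  have hss : s ^ 2 = v ^ 2 + w ^ 2 := Real.sq_sqrt (by positivity)
  obtain ⟨ε, hε, hball⟩ := Metric.isOpen_iff.1 hUo z₁ hz₁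
  set t := min (ε / 2) (r * (s - L)) with ht
  have ht0 : 0 < t := lt_min (by linarith) (by nlinarith)
  set z : ℝ × ℝ := (z₁.1 + (t / s) * v, z₁.2 + (t / s) * w) with hzdef
  have hvb : |v| ≤ s := abs_le_sqrt_add v w
  have hwb : |w| ≤ s := by rw [hs, add_comm]; exact abs_le_sqrt_add w v
  have hts : 0 ≤ t / s := by positivity
  have hzU : z ∈ U := by
    apply hball
    rw [Metric.mem_ball, Prod.dist_eq]
    have h1 : dist z.1 z₁.1 ≤ t := by
      rw [Real.dist_eq, hzdef]
      simp only [add_sub_cancel_left]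
      rw [abs_mul, abs_of_nonneg hts]
      calc t / s * |v| ≤ t / s * s := by gcongr
        _ = t := by field_simp
    have h2 : dist z.2 z₁.2 ≤ t := by
      rw [Real.dist_eq, hzdef]
      simp only [add_sub_cancel_left]
      rw [abs_mul, abs_of_nonneg hts]
      calc t / s * |w| ≤ t / s * s := by gcongr
        _ = t := by field_simp
    have : t < ε := lt_of_le_of_lt (min_le_left _ _) (by linarith)
    exact max_lt (lt_of_le_of_lt h1 this) (lt_of_le_of_lt h2 this)
  have hd1 : z.1 - z₁.1 = (t / s) * v := by simp [hzdef]
  have hd2 : z.2 - z₁.2 = (t / s) * w := by simp [hzdef]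
  have hkey := hsupp z hzU
  rw [hd1, hd2] at hkey
  have hsne : s ≠ 0 := ne_of_gt hs0
  have hq : (t / s) * v * v + (t / s) * w * w = t * s := by
    calc (t / s) * v * v + (t / s) * w * w = (t / s) * (v ^ 2 + w ^ 2) := by ring
      _ = (t / s) * s ^ 2 := by rw [← hss]
      _ = t * s := by field_simp
  have hq2 : ((t / s) * v) ^ 2 + ((t / s) * w) ^ 2 = t ^ 2 := by
    calc ((t / s) * v) ^ 2 + ((t / s) * w) ^ 2 = (t / s) ^ 2 * (v ^ 2 + w ^ 2) := by ring
      _ = (t / s) ^ 2 * s ^ 2 := by rw [← hss]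
      _ = t ^ 2 := by field_simp
  have hlip := hζL z hzU z₁ hz₁
  have hsqn : Real.sqrt (sqnorm (z - z₁)) = t := by
    have : sqnorm (z - z₁) = t ^ 2 := by
      simp only [sqnorm, Prod.fst_sub, Prod.snd_sub, hd1, hd2]
      exact hq2
    rw [this, Real.sqrt_sq ht0.le]
  rw [hsqn] at hlip
  have h1 : ζ z - ζ z₁ ≤ L * t := (le_abs_self _).trans hlip
  have h2 : t * s - t ^ 2 / (2 * r) ≤ ζ z - ζ z₁ := by
    rw [hq2] at hkey
    have e : v * (t / s * v) + w * (t / s * w) = t * s := by rw [← hq]; ring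
    linarith
  have h3 : t * s - t ^ 2 / (2 * r) ≤ L * t := le_trans h2 h1
  have hsl : 0 < s - L := by linarith
  have h7 : (t * (s - L)) * (2 * r) ≤ t ^ 2 := by
    rw [← le_div_iff₀ (by positivity)]; linarith
  have h8 : t * t ≤ t * (r * (s - L)) :=
    mul_le_mul_of_nonneg_left (min_le_right _ _) ht0.le
  nlinarith [mul_pos (mul_pos hr ht0) hsl]

lemma sub_support {U : Set (ℝ × ℝ)} (hUo : IsOpen U) {r : ℝ} (hr : 0 < r)
    {ζ : ℝ × ℝ → ℝ} (hsc : SemiconvexOn U r ζ) {z₁ : ℝ × ℝ} (hz₁ : z₁ ∈ U) {v w M : ℝ}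
    (hloc : ∀ᶠ z in 𝓝 z₁, ζ z ≤ ζ z₁ + v * (z.1 - z₁.1) + w * (z.2 - z₁.2)
      + M * ((z.1 - z₁.1) ^ 2 + (z.2 - z₁.2) ^ 2)) :
    ∀ z ∈ U, ζ z₁ + v * (z.1 - z₁.1) + w * (z.2 - z₁.2)
      - ((z.1 - z₁.1) ^ 2 + (z.2 - z₁.2) ^ 2) / (2 * r) ≤ ζ z := by
  set g : ℝ × ℝ → ℝ := fun z => ζ z + sqnorm z / (2 * r) with hg
  have hgc : ConvexOn ℝ U g := hsc
  set q1 := v + z₁.1 / r with hq1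
  set q2 := w + z₁.2 / r with hq2
  set M' := M + 1 / (2 * r) with hM'
  have hrne : r ≠ 0 := ne_of_gt hr
  -- local upper bound for g
  have hloc' : ∀ᶠ z in 𝓝 z₁, g z ≤ g z₁ + q1 * (z.1 - z₁.1) + q2 * (z.2 - z₁.2)
      + M' * ((z.1 - z₁.1) ^ 2 + (z.2 - z₁.2) ^ 2) := by
    filter_upwards [hloc] with z hz
    have hid : g z - g z₁ - (q1 * (z.1 - z₁.1) + q2 * (z.2 - z₁.2))
        - M' * ((z.1 - z₁.1) ^ 2 + (z.2 - z₁.2) ^ 2)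
        = ζ z - ζ z₁ - (v * (z.1 - z₁.1) + w * (z.2 - z₁.2))
        - M * ((z.1 - z₁.1) ^ 2 + (z.2 - z₁.2) ^ 2) := by
      simp only [hg, sqnorm, hq1, hq2, hM']
      field_simp
      ring
    linarith
  -- main claim: q is a subgradient of g at z₁
  have hmain : ∀ z ∈ U, g z₁ + q1 * (z.1 - z₁.1) + q2 * (z.2 - z₁.2) ≤ g z := by
    intro z hzU
    obtain ⟨ε₁, hε₁, hloc''⟩ := Metric.eventually_nhds_iff.1 hloc'
    obtain ⟨ε₂, hε₂, hball⟩ := Metric.isOpen_iff.1 hUo z₁ hz₁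
    set ε := min ε₁ ε₂ with hε
    have hε0 : 0 < ε := lt_min hε₁ hε₂
    set d : ℝ × ℝ := z - z₁ with hd
    set K := dist z z₁ + 1 with hK
    have hK0 : 0 < K := by positivity
    set t₀ := min 1 (ε / (2 * K)) with ht₀
    have ht₀0 : 0 < t₀ := lt_min one_pos (by positivity)
    have key : ∀ t : ℝ, t ∈ Set.Ioo (0:ℝ) t₀ →
        q1 * d.1 + q2 * d.2 - M' * t * sqnorm d ≤ g z - g z₁ := by
      intro t ⟨ht0, htt⟩
      have ht1 : t ≤ 1 := le_trans htt.le (min_le_left _ _)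
      have htep : t * dist z z₁ < ε := by
        have h1 : t < ε / (2 * K) := lt_of_lt_of_le htt (min_le_right _ _)
        have h2 : dist z z₁ ≤ K := by rw [hK]; linarith [dist_nonneg (x := z) (y := z₁)]
        calc t * dist z z₁ ≤ t * K := mul_le_mul_of_nonneg_left h2 ht0.le
          _ < ε / (2 * K) * K := mul_lt_mul_of_pos_right h1 hK0
          _ = ε / 2 := by field_simp
          _ < ε := by linarith
      have hmem : ∀ σ : ℝ, |σ| = 1 → z₁ + (σ * t) • d ∈ Metric.ball z₁ ε := by
        intro σ hσ
        rw [Metric.mem_ball, dist_eq_norm]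
        simp only [add_sub_cancel_left]
        rw [norm_smul]
        have : ‖σ * t‖ = t := by
          rw [norm_mul]
          simp [Real.norm_eq_abs, hσ, abs_of_pos ht0]
        rw [this]
        have : ‖d‖ = dist z z₁ := by rw [hd, ← dist_eq_norm]
        rw [this]; exact htep
      have hmemp : z₁ + t • d ∈ Metric.ball z₁ ε := by
        have := hmem 1 (by norm_num); simpa using this
      have hmemm : z₁ + (-t) • d ∈ Metric.ball z₁ ε := by
        have := hmem (-1) (by norm_num); simpa using this
      have hUp : z₁ + t • d ∈ U := hball (Metric.ball_subset_ball (min_le_right _ _) hmemp)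
      have hUm : z₁ + (-t) • d ∈ U := hball (Metric.ball_subset_ball (min_le_right _ _) hmemm)
      -- convexity along the segment
      have hA : g (z₁ + t • d) ≤ (1 - t) * g z₁ + t * g z := by
        have := hgc.2 hz₁ hzU (by linarith : (0:ℝ) ≤ 1 - t) ht0.le (by ring)
        have he : (1 - t) • z₁ + t • z = z₁ + t • d := by
          rw [hd, smul_sub, sub_smul, one_smul]; abel
        rw [he] at this
        simpa using this
      -- midpoint convexity
      have hB : g z₁ ≤ (1/2) * g (z₁ + t • d) + (1/2) * g (z₁ + (-t) • d) := by
        have := hgc.2 hUp hUm (by norm_num : (0:ℝ) ≤ 1/2) (by norm_num : (0:ℝ) ≤ 1/2) (by norm_num)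
        have he : (1/2 : ℝ) • (z₁ + t • d) + (1/2 : ℝ) • (z₁ + (-t) • d) = z₁ := by
          module
        rw [he] at this
        simpa using this
      -- local upper bound at z₁ - t d
      have hCb : g (z₁ + (-t) • d) ≤ g z₁ + q1 * (-(t * d.1)) + q2 * (-(t * d.2))
          + M' * (t^2 * sqnorm d) := by
        have hin : dist (z₁ + (-t) • d) z₁ < ε₁ := by
          have := hmemm
          rw [Metric.mem_ball] at this
          exact lt_of_lt_of_le this (min_le_left _ _)
        have := hloc'' hin
        have e1 : (z₁ + (-t) • d).1 - z₁.1 = -(t * d.1) := by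
          simp [Prod.fst_add, Prod.smul_fst]
        have e2 : (z₁ + (-t) • d).2 - z₁.2 = -(t * d.2) := by
          simp [Prod.snd_add, Prod.smul_snd]
        rw [e1, e2] at this
        have e3 : (-(t * d.1))^2 + (-(t * d.2))^2 = t^2 * sqnorm d := by
          simp [sqnorm]; ring
        rw [e3] at this
        exact this
      -- combine
      have hcomb : g z₁ + t * (q1 * d.1 + q2 * d.2) - M' * (t^2 * sqnorm d)
          ≤ g (z₁ + t • d) := by
        ring_nf at hB hCb ⊢
        linarith
      have hfin : t * (q1 * d.1 + q2 * d.2) - M' * (t^2 * sqnorm d) ≤ t * (g z - g z₁) := by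
        ring_nf at hA hcomb ⊢
        linarith
      refine le_of_mul_le_mul_left ?_ ht0
      calc t * (q1 * d.1 + q2 * d.2 - M' * t * sqnorm d)
          = t * (q1 * d.1 + q2 * d.2) - M' * (t^2 * sqnorm d) := by ring
        _ ≤ t * (g z - g z₁) := hfin
    -- pass to the limit t → 0⁺
    have hten : Filter.Tendsto (fun t : ℝ => q1 * d.1 + q2 * d.2 - M' * t * sqnorm d)
        (𝓝[>] (0:ℝ)) (𝓝 (q1 * d.1 + q2 * d.2)) := by
      have hc : Continuous (fun t : ℝ => q1 * d.1 + q2 * d.2 - M' * t * sqnorm d) :=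
        continuous_const.sub (((continuous_const.mul continuous_id).mul continuous_const))
      have := (hc.tendsto 0).mono_left (nhdsWithin_le_nhds (s := Set.Ioi (0:ℝ)))
      simpa using this
    have hev : ∀ᶠ t in 𝓝[>] (0:ℝ), q1 * d.1 + q2 * d.2 - M' * t * sqnorm d ≤ g z - g z₁ := by
      filter_upwards [Ioo_mem_nhdsGT_of_mem (by constructor <;> [exact le_refl 0; exact ht₀0] : (0:ℝ) ∈ Set.Ico 0 t₀)] with t ht
      exact key t ht
    have hlim := le_of_tendsto hten hev
    have hd1 : d.1 = z.1 - z₁.1 := rfl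
    have hd2 : d.2 = z.2 - z₁.2 := rfl
    rw [hd1, hd2] at hlim
    linarith
  -- translate back to ζ
  intro z hzU
  have h := hmain z hzU
  have hid : g z₁ + q1 * (z.1 - z₁.1) + q2 * (z.2 - z₁.2) - g z
      = ζ z₁ + v * (z.1 - z₁.1) + w * (z.2 - z₁.2)
        - ((z.1 - z₁.1) ^ 2 + (z.2 - z₁.2) ^ 2) / (2 * r) - ζ z
        + ((z.1 - z₁.1) ^ 2 + (z.2 - z₁.2) ^ 2) / (2 * r)
        + (sqnorm z₁ - sqnorm z) / (2*r) + (z₁.1 * (z.1 - z₁.1) + z₁.2 * (z.2 - z₁.2)) / r := by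
    simp only [hg, hq1, hq2]
    field_simp
    ring
  have hzero : ((z.1 - z₁.1) ^ 2 + (z.2 - z₁.2) ^ 2) / (2 * r)
      + (sqnorm z₁ - sqnorm z) / (2*r) + (z₁.1 * (z.1 - z₁.1) + z₁.2 * (z.2 - z₁.2)) / r = 0 := by
    simp only [sqnorm]
    field_simp
    ring
  set A := ((z.1 - z₁.1) ^ 2 + (z.2 - z₁.2) ^ 2) / (2 * r) with hA
  set B := (sqnorm z₁ - sqnorm z) / (2*r) with hB
  set C := (z₁.1 * (z.1 - z₁.1) + z₁.2 * (z.2 - z₁.2)) / r with hC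
  linarith

lemma quad_hasfderiv (C a b : ℝ) (z : ℝ × ℝ) :
    HasFDerivAt (fun z : ℝ × ℝ => C * ((z.1 - a) ^ 2 + (z.2 - b) ^ 2))
      ((2 * C * (z.1 - a)) • (ContinuousLinearMap.fst ℝ ℝ ℝ)
        + (2 * C * (z.2 - b)) • (ContinuousLinearMap.snd ℝ ℝ ℝ)) z := by
  have h1 : HasFDerivAt (fun z : ℝ × ℝ => z.1 - a) (ContinuousLinearMap.fst ℝ ℝ ℝ) z :=
    (hasFDerivAt_fst).sub_const a
  have h2 : HasFDerivAt (fun z : ℝ × ℝ => z.2 - b) (ContinuousLinearMap.snd ℝ ℝ ℝ) z :=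
    (hasFDerivAt_snd).sub_const b
  have h1s := h1.mul h1
  have h2s := h2.mul h2
  have hsum := (h1s.add h2s).const_mul C
  have hfe : (fun z : ℝ × ℝ => C * ((z.1 - a) * (z.1 - a) + (z.2 - b) * (z.2 - b)))
      = (fun z : ℝ × ℝ => C * ((z.1 - a) ^ 2 + (z.2 - b) ^ 2)) := by
    funext y; ring
  simp only [Pi.mul_apply, Pi.add_apply] at hsum
  rw [hfe] at hsum
  refine hsum.congr_fderiv ?_
  ext <;> simp <;> ring

lemma quad_pdt (C a b : ℝ) (z : ℝ × ℝ) :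
    pdt (fun z : ℝ × ℝ => C * ((z.1 - a) ^ 2 + (z.2 - b) ^ 2)) z = 2 * C * (z.1 - a) := by
  have h := (quad_hasfderiv C a b z).fderiv
  simp only [pdt, h]
  simp

lemma quad_pdx (C a b : ℝ) (z : ℝ × ℝ) :
    pdx (fun z : ℝ × ℝ => C * ((z.1 - a) ^ 2 + (z.2 - b) ^ 2)) z = 2 * C * (z.2 - b) := by
  have h := (quad_hasfderiv C a b z).fderiv
  simp only [pdx, h]
  simp

lemma key_step (U : Set (ℝ × ℝ)) (hUo : IsOpen U)
    (L δ r : ℝ) (hL : 0 ≤ L) (hδ : 0 < δ) (hr : 0 < r)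
    (ζ : ℝ × ℝ → ℝ) (hζL : EuclLipOnWith L ζ U) (hsc : SemiconvexOn U r ζ)
    (hsub : ViscSubsolOn U ζ (-δ)) (z₀ : ℝ × ℝ) (ρ : ℝ) (hρ0 : 0 < ρ)
    (hρ : Metric.closedBall z₀ ρ ⊆ U) (C : ℝ) (hC : 0 < C) (hCL : L / C < ρ) :
    ∃ z₁ v w, z₁ ∈ U ∧
      Real.sqrt ((z₁.1 - z₀.1) ^ 2 + (z₁.2 - z₀.2) ^ 2) ≤ L / C ∧
      v + w ^ 2 / 2 ≤ -δ ∧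
      ∀ z ∈ U, ζ z₁ + v * (z.1 - z₁.1) + w * (z.2 - z₁.2)
        - ((z.1 - z₁.1) ^ 2 + (z.2 - z₁.2) ^ 2) / (2 * r) ≤ ζ z := by
  have hcont : ContinuousOn ζ U := zeta_contOn hL hζL
  set B := Metric.closedBall z₀ ρ with hB
  have hBc : IsCompact B := isCompact_closedBall z₀ ρ
  have hBne : B.Nonempty := ⟨z₀, Metric.mem_closedBall_self hρ0.le⟩
  set φ : ℝ × ℝ → ℝ := fun z => C * ((z.1 - z₀.1) ^ 2 + (z.2 - z₀.2) ^ 2) with hφ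
  have hφc : Continuous φ := by fun_prop
  have hGcont : ContinuousOn (fun z => ζ z - φ z) B :=
    (hcont.mono hρ).sub hφc.continuousOn
  obtain ⟨z₁, hz₁B, hmax⟩ := hBc.exists_isMaxOn hBne hGcont
  have hz₁U : z₁ ∈ U := hρ hz₁B
  set s := Real.sqrt ((z₁.1 - z₀.1) ^ 2 + (z₁.2 - z₀.2) ^ 2) with hsdef
  have hs0 : 0 ≤ s := Real.sqrt_nonneg _
  have hss : s ^ 2 = (z₁.1 - z₀.1) ^ 2 + (z₁.2 - z₀.2) ^ 2 := Real.sq_sqrt (by positivity)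
  have hG0 : ζ z₀ - φ z₀ ≤ ζ z₁ - φ z₁ := hmax (Metric.mem_closedBall_self hρ0.le)
  have hφ0 : φ z₀ = 0 := by simp [hφ]
  have hlip := hζL z₁ hz₁U z₀ (hρ (Metric.mem_closedBall_self hρ0.le))
  have hsqn : Real.sqrt (sqnorm (z₁ - z₀)) = s := by
    simp only [sqnorm, Prod.fst_sub, Prod.snd_sub, hsdef]
  rw [hsqn] at hlip
  have hCs : C * s ^ 2 ≤ L * s := by
    have h1 : ζ z₁ - ζ z₀ ≤ L * s := (le_abs_self _).trans hlip
    have h2 : φ z₁ = C * s ^ 2 := by rw [hφ, hss]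
    linarith
  have hsLC : s ≤ L / C := by
    rcases eq_or_lt_of_le hs0 with h | h
    · rw [← h]; positivity
    · rw [le_div_iff₀ hC]
      have hsne : s ≠ 0 := ne_of_gt h
      calc s * C = C * s ^ 2 / s := by field_simp
        _ ≤ L * s / s := by gcongr
        _ = L := by field_simp
  have hdist : dist z₁ z₀ ≤ s := by
    rw [Prod.dist_eq]
    have h1 : dist z₁.1 z₀.1 ≤ s := by
      rw [Real.dist_eq, hsdef]; exact abs_le_sqrt_add _ _
    have h2 : dist z₁.2 z₀.2 ≤ s := by
      rw [Real.dist_eq, hsdef, add_comm ((z₁.1 - z₀.1) ^ 2)]; exact abs_le_sqrt_add _ _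
    exact max_le h1 h2
  have hball : z₁ ∈ Metric.ball z₀ ρ := by
    rw [Metric.mem_ball]
    exact lt_of_le_of_lt (hdist.trans hsLC) hCL
  have hloc : IsLocalMax (fun z => ζ z - φ z) z₁ := by
    filter_upwards [Metric.isOpen_ball.mem_nhds hball] with y hy
    exact hmax (Metric.ball_subset_closedBall hy)
  have hφsm : ContDiff ℝ (⊤ : ℕ∞) φ := by
    rw [hφ]; fun_prop
  have hvis := hsub φ hφsm z₁ hz₁U hloc
  rw [hφ] at hvis
  rw [quad_pdt C z₀.1 z₀.2 z₁, quad_pdx C z₀.1 z₀.2 z₁] at hvis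
  set v := 2 * C * (z₁.1 - z₀.1) with hv
  set w := 2 * C * (z₁.2 - z₀.2) with hw
  have hloc2 : ∀ᶠ z in 𝓝 z₁, ζ z ≤ ζ z₁ + v * (z.1 - z₁.1) + w * (z.2 - z₁.2)
      + C * ((z.1 - z₁.1) ^ 2 + (z.2 - z₁.2) ^ 2) := by
    filter_upwards [Metric.isOpen_ball.mem_nhds hball] with y hy
    have h1 := hmax (Metric.ball_subset_closedBall hy)
    have h2 : φ y - φ z₁ = v * (y.1 - z₁.1) + w * (y.2 - z₁.2)
        + C * ((y.1 - z₁.1) ^ 2 + (y.2 - z₁.2) ^ 2) := by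
      rw [hφ, hv, hw]; ring
    have h1' : ζ y - φ y ≤ ζ z₁ - φ z₁ := h1
    linarith
  exact ⟨z₁, v, w, hz₁U, hsLC, hvis, sub_support hUo hr hsc hz₁U hloc2⟩

/-- **Step 1 of the maximum-principle lemma: affine supporting subsolutions.** -/
theorem stmt6 (U : Set (ℝ × ℝ)) (hU : Convex ℝ U) (hUo : IsOpen U)
    (L δ r : ℝ) (hL : 0 ≤ L) (hδ : 0 < δ) (hr : 0 < r) (hr1 : r ≤ 1)
    (ζ : ℝ × ℝ → ℝ) (hζL : EuclLipOnWith L ζ U) (hsc : SemiconvexOn U r ζ)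
    (hsub : ViscSubsolOn U ζ (-δ)) :
    ∀ z₀ ∈ U, ∃ v w : ℝ, Real.sqrt (v ^ 2 + w ^ 2) ≤ L ∧ v + w ^ 2 / 2 ≤ -δ ∧
      ∀ z ∈ U, ζ z₀ + v * (z.1 - z₀.1) + w * (z.2 - z₀.2)
        - ((z.1 - z₀.1) ^ 2 + (z.2 - z₀.2) ^ 2) / (2 * r) ≤ ζ z := by
  intro z₀ hz₀
  -- a closed ball around z₀ inside U
  obtain ⟨ε, hε, hball⟩ := Metric.isOpen_iff.1 hUo z₀ hz₀
  set ρ := ε / 2 with hρdef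
  have hρ0 : 0 < ρ := by positivity
  have hρ : Metric.closedBall z₀ ρ ⊆ U :=
    (Metric.closedBall_subset_ball (by linarith)).trans hball
  -- the sequence of penalization constants
  set Cf : ℕ → ℝ := fun n => (L + 1) / ρ + n with hCf
  have hCpos : ∀ n, 0 < Cf n := by
    intro n; have : (0:ℝ) ≤ n := Nat.cast_nonneg n
    have : 0 < (L + 1) / ρ := by positivity
    simp only [hCf]; linarith [Nat.cast_nonneg (α := ℝ) n]
  have hCL : ∀ n, L / Cf n < ρ := by
    intro n
    have hpos : 0 < (L + 1) / ρ := by positivity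
    have hle : (L + 1) / ρ ≤ Cf n := by
      simp only [hCf]; linarith [Nat.cast_nonneg (α := ℝ) n]
    have h1 : L / Cf n ≤ L / ((L + 1) / ρ) := div_le_div_of_nonneg_left hL hpos hle
    have h2 : L / ((L + 1) / ρ) < ρ := by
      rw [div_div_eq_mul_div, div_lt_iff₀ (by positivity)]
      nlinarith
    linarith
  have hCtop : Tendsto Cf atTop atTop :=
    tendsto_atTop_add_const_left _ _ tendsto_natCast_atTop_atTop
  have hC0 : Tendsto (fun n => L / Cf n) atTop (𝓝 0) :=
    Tendsto.div_atTop tendsto_const_nhds hCtop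
  have hK := fun n => key_step U hUo L δ r hL hδ hr ζ hζL hsc hsub z₀ ρ hρ0 hρ
    (Cf n) (hCpos n) (hCL n)
  choose zc vc wc hzU hdist hH hsupp using hK
  have hvwb : ∀ n, Real.sqrt ((vc n) ^ 2 + (wc n) ^ 2) ≤ L := fun n =>
    supp_bound hUo hL hr hζL (hzU n) (hsupp n)
  have pmem : ∀ n, (vc n, wc n) ∈ Metric.closedBall (0 : ℝ × ℝ) L := by
    intro n
    rw [Metric.mem_closedBall, Prod.dist_eq]
    have h1 : |vc n| ≤ L := (abs_le_sqrt_add _ _).trans (hvwb n)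
    have h2 : |wc n| ≤ L := by
      refine le_trans ?_ (hvwb n)
      rw [add_comm ((vc n) ^ 2)]
      exact abs_le_sqrt_add _ _
    simp only [Prod.fst_zero, Prod.snd_zero, Real.dist_eq, sub_zero]
    exact max_le h1 h2
  obtain ⟨p, hpmem, ψ, hψmono, hψtend⟩ :=
    (isCompact_closedBall (0 : ℝ × ℝ) L).tendsto_subseq pmem
  -- convergence of the base points
  have hst : Tendsto (fun k => Real.sqrt (((zc (ψ k)).1 - z₀.1) ^ 2
      + ((zc (ψ k)).2 - z₀.2) ^ 2)) atTop (𝓝 0) := by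
    refine squeeze_zero (fun k => Real.sqrt_nonneg _) (fun k => hdist (ψ k)) ?_
    exact hC0.comp hψmono.tendsto_atTop
  have h1 : Tendsto (fun k => (zc (ψ k)).1) atTop (𝓝 z₀.1) := by
    rw [tendsto_iff_dist_tendsto_zero]
    refine squeeze_zero (fun k => dist_nonneg) (fun k => ?_) hst
    rw [Real.dist_eq]
    exact abs_le_sqrt_add _ _
  have h2 : Tendsto (fun k => (zc (ψ k)).2) atTop (𝓝 z₀.2) := by
    rw [tendsto_iff_dist_tendsto_zero]
    refine squeeze_zero (fun k => dist_nonneg) (fun k => ?_) hst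
    rw [Real.dist_eq, add_comm (((zc (ψ k)).1 - z₀.1) ^ 2)]
    exact abs_le_sqrt_add _ _
  have hzeta : Tendsto (fun k => ζ (zc (ψ k))) atTop (𝓝 (ζ z₀)) := by
    rw [tendsto_iff_dist_tendsto_zero]
    refine squeeze_zero (fun k => dist_nonneg) (fun k => ?_) (by simpa using hst.const_mul L)
    rw [Real.dist_eq]
    have := hζL (zc (ψ k)) (hzU (ψ k)) z₀ hz₀
    refine this.trans (le_of_eq ?_)
    simp only [sqnorm, Prod.fst_sub, Prod.snd_sub]
  have hv : Tendsto (fun k => vc (ψ k)) atTop (𝓝 p.1) :=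
    (continuous_fst.tendsto p).comp hψtend
  have hw : Tendsto (fun k => wc (ψ k)) atTop (𝓝 p.2) :=
    (continuous_snd.tendsto p).comp hψtend
  -- the limiting support inequality
  have hfinal : ∀ z ∈ U, ζ z₀ + p.1 * (z.1 - z₀.1) + p.2 * (z.2 - z₀.2)
      - ((z.1 - z₀.1) ^ 2 + (z.2 - z₀.2) ^ 2) / (2 * r) ≤ ζ z := by
    intro z hz
    have hseq : Tendsto (fun k => ζ (zc (ψ k)) + vc (ψ k) * (z.1 - (zc (ψ k)).1)
        + wc (ψ k) * (z.2 - (zc (ψ k)).2)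
        - ((z.1 - (zc (ψ k)).1) ^ 2 + (z.2 - (zc (ψ k)).2) ^ 2) / (2 * r)) atTop
        (𝓝 (ζ z₀ + p.1 * (z.1 - z₀.1) + p.2 * (z.2 - z₀.2)
          - ((z.1 - z₀.1) ^ 2 + (z.2 - z₀.2) ^ 2) / (2 * r))) := by
      have c1 : Tendsto (fun _ : ℕ => z.1) atTop (𝓝 z.1) := tendsto_const_nhds
      have c2 : Tendsto (fun _ : ℕ => z.2) atTop (𝓝 z.2) := tendsto_const_nhds
      have t2 := hv.mul (c1.sub h1)
      have t3 := hw.mul (c2.sub h2)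
      have t4 := (((c1.sub h1).pow 2).add ((c2.sub h2).pow 2)).div_const (2 * r)
      exact ((hzeta.add t2).add t3).sub t4
    exact le_of_tendsto hseq (Eventually.of_forall fun k => hsupp (ψ k) z hz)
  have hHfinal : p.1 + p.2 ^ 2 / 2 ≤ -δ := by
    exact le_of_tendsto (hv.add ((hw.pow 2).div_const 2))
      (Eventually.of_forall fun k => hH (ψ k))
  exact ⟨p.1, p.2, supp_bound hUo hL hr hζL hz₀ hfinal, hHfinal, hfinal⟩
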